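/- Let T > 0, let K : ℚₚⁿ × (0,T] → ℝ be nonnegative with ∫_{ℚₚⁿ} K(x,t) dⁿx = 1 for each t, and suppose K(x,t) ≤ C t (t^{1/(α−n)} + ‖x‖ₚ)^{−α} with α > n + λ, λ ≥ 0. Let φ : ℚₚⁿ → ℂ be locally constant with parameter l and |φ(x)| ≤ C'(1 + ‖x‖ₚ^{λ}). Then for every x ∈ ℚₚⁿ, lim_{t→0⁺} ∫_{ℚₚⁿ} K(x−ξ, t) φ(ξ) dⁿξ = φ(x). -/

import Mathlib

open MeasureTheory Filter
open scoped ENNReal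

set_option linter.unusedSectionVars false

namespace Stmt13Aux

variable {p : ℕ} [Fact p.Prime]

lemma coord_approx (k : ℤ) (z : ℚ_[p]) (hz : ‖z‖ ≤ (p:ℝ)^(k+1)) :
    ∃ j : Fin p, ‖z - ((j:ℕ) : ℚ_[p]) * (p:ℚ_[p])^(-(k+1))‖ ≤ (p:ℝ)^k := by
  have hp1 : 1 < p := (Fact.out : p.Prime).one_lt
  have hpR : (0:ℝ) < p := by positivity
  have hpz : (p:ℚ_[p]) ≠ 0 := by
    exact_mod_cast Nat.cast_ne_zero.2 (Fact.out : p.Prime).ne_zero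
  set u : ℚ_[p] := z * (p:ℚ_[p])^(k+1) with hu_def
  have hu : ‖u‖ ≤ 1 := by
    rw [hu_def, norm_mul, Padic.norm_p_zpow]
    calc ‖z‖ * (p:ℝ)^(-(k+1)) ≤ (p:ℝ)^(k+1) * (p:ℝ)^(-(k+1)) := by
          apply mul_le_mul_of_nonneg_right hz (by positivity)
      _ = 1 := by rw [zpow_neg, mul_inv_cancel₀ (zpow_ne_zero _ (ne_of_gt hpR))]
  set U : ℤ_[p] := ⟨u, hu⟩ with hU_def
  set j : ℕ := U.appr 1 with hj_def
  have hjlt : j < p := by simpa using U.appr_lt 1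
  refine ⟨⟨j, hjlt⟩, ?_⟩
  have hspec : ‖U - (j:ℤ_[p])‖ ≤ (p:ℝ)^(-(1:ℕ):ℤ) :=
    (PadicInt.norm_le_pow_iff_mem_span_pow _ 1).2 (by simpa using U.appr_spec 1)
  have hcoe : ((U - (j:ℤ_[p]) : ℤ_[p]) : ℚ_[p]) = u - (j:ℚ_[p]) := by
    push_cast
    rfl
  have hnorm : ‖u - (j:ℚ_[p])‖ ≤ (p:ℝ)^(-(1:ℤ)) := by
    rw [← hcoe, PadicInt.padic_norm_e_of_padicInt]
    simpa using hspec
  have key : z - ((j:ℕ):ℚ_[p]) * (p:ℚ_[p])^(-(k+1)) = (u - (j:ℚ_[p])) * (p:ℚ_[p])^(-(k+1)) := by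
    rw [hu_def, sub_mul, mul_assoc, zpow_neg, mul_inv_cancel₀ (zpow_ne_zero _ hpz), mul_one]
  rw [key, norm_mul, Padic.norm_p_zpow, neg_neg]
  calc ‖u - (j:ℚ_[p])‖ * (p:ℝ)^(k+1) ≤ (p:ℝ)^(-(1:ℤ)) * (p:ℝ)^(k+1) := by
        apply mul_le_mul_of_nonneg_right hnorm (by positivity)
    _ = (p:ℝ)^k := by
        rw [← zpow_add₀ (ne_of_gt hpR)]; congr 1; ring

lemma coord_sep (k : ℤ) (j j' : Fin p) (hjj : j ≠ j') :
    ‖((j:ℕ) : ℚ_[p]) * (p:ℚ_[p])^(-(k+1)) - ((j':ℕ) : ℚ_[p]) * (p:ℚ_[p])^(-(k+1))‖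
      = (p:ℝ)^(k+1) := by
  have hp1 : 1 < p := (Fact.out : p.Prime).one_lt
  have hpR : (0:ℝ) < p := by positivity
  have hd : (((j:ℕ):ℤ) - ((j':ℕ):ℤ)) ≠ 0 := by
    intro h
    apply hjj
    have : ((j:ℕ):ℤ) = ((j':ℕ):ℤ) := by linarith [sub_eq_zero.mp h]
    exact Fin.ext (by exact_mod_cast this)
  have hnd : ¬ ((p:ℤ) ∣ (((j:ℕ):ℤ) - ((j':ℕ):ℤ))) := by
    intro hdvd
    have := Int.eq_zero_of_abs_lt_dvd hdvd ?_
    · exact hd this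
    · have h1 : ((j:ℕ):ℤ) < p := by exact_mod_cast j.2
      have h2 : ((j':ℕ):ℤ) < p := by exact_mod_cast j'.2
      have h3 : (0:ℤ) ≤ ((j:ℕ):ℤ) := by positivity
      have h4 : (0:ℤ) ≤ ((j':ℕ):ℤ) := by positivity
      rw [abs_sub_lt_iff]; omega
  have hnorm1 : ‖((((j:ℕ):ℤ) - ((j':ℕ):ℤ) : ℤ) : ℚ_[p])‖ = 1 := by
    rcases lt_or_eq_of_le (Padic.norm_int_le_one (p := p) ((((j:ℕ):ℤ) - ((j':ℕ):ℤ)))) with h | h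
    · exact absurd (Padic.norm_intCast_lt_one_iff.1 h) hnd
    · exact h
  rw [← sub_mul, norm_mul, Padic.norm_p_zpow, neg_neg]
  have : (((j:ℕ) : ℚ_[p]) - ((j':ℕ) : ℚ_[p])) = ((((j:ℕ):ℤ) - ((j':ℕ):ℤ) : ℤ) : ℚ_[p]) := by
    push_cast; ring
  rw [this, hnorm1, one_mul]

variable {n : ℕ}

local notation "V" => (Fin n → ℚ_[p])

noncomputable def rep (k : ℤ) (f : Fin n → Fin p) : V :=
  fun i => ((f i : ℕ) : ℚ_[p]) * (p:ℚ_[p])^(-(k+1))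

lemma norm_rep_le (k : ℤ) (f : Fin n → Fin p) (i : Fin n) :
    ‖rep (p := p) k f i‖ ≤ (p:ℝ)^(k+1) := by
  have hp1 : 1 < p := (Fact.out : p.Prime).one_lt
  have hpR : (0:ℝ) < p := by positivity
  have h1 : ‖(((f i : ℕ) : ℤ) : ℚ_[p])‖ ≤ 1 := Padic.norm_int_le_one _
  calc ‖rep (p := p) k f i‖ = ‖(((f i : ℕ) : ℤ) : ℚ_[p])‖ * (p:ℝ)^(k+1) := by
        rw [rep, norm_mul, Padic.norm_p_zpow, neg_neg]; push_cast; ring_nf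
    _ ≤ 1 * (p:ℝ)^(k+1) := mul_le_mul_of_nonneg_right h1 (by positivity)
    _ = (p:ℝ)^(k+1) := one_mul _

lemma ball_cover (k : ℤ) :
    Metric.closedBall (0 : V) ((p:ℝ)^(k+1)) =
      ⋃ f : Fin n → Fin p, Metric.closedBall (rep (p := p) k f) ((p:ℝ)^k) := by
  have hp1 : 1 < p := (Fact.out : p.Prime).one_lt
  have hpR : (0:ℝ) < p := by positivity
  ext z
  simp only [Metric.mem_closedBall, Set.mem_iUnion, dist_eq_norm, sub_zero]
  constructor
  · intro hz
    have hzi : ∀ i, ∃ j : Fin p, ‖z i - ((j:ℕ) : ℚ_[p]) * (p:ℚ_[p])^(-(k+1))‖ ≤ (p:ℝ)^k := by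
      intro i
      exact coord_approx k (z i) ((norm_le_pi_norm z i).trans hz)
    choose g hg using hzi
    refine ⟨g, ?_⟩
    rw [pi_norm_le_iff_of_nonneg (by positivity)]
    intro i
    simpa [rep] using hg i
  · rintro ⟨f, hf⟩
    rw [pi_norm_le_iff_of_nonneg (by positivity)]
    intro i
    have h1 : ‖z i - rep (p := p) k f i‖ ≤ (p:ℝ)^k :=
      (norm_le_pi_norm (z - rep (p := p) k f) i).trans hf
    have h2 : ‖z i‖ ≤ max ‖z i - rep (p := p) k f i‖ ‖rep (p := p) k f i‖ := by
      simpa using Padic.nonarchimedean (z i - rep (p := p) k f i) (rep (p := p) k f i)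
    refine h2.trans (max_le (h1.trans ?_) (norm_rep_le k f i))
    exact zpow_le_zpow_right₀ (by exact_mod_cast hp1.le) (by omega)

lemma ball_disj (k : ℤ) :
    Pairwise (Function.onFun Disjoint
      (fun f : Fin n → Fin p => Metric.closedBall (rep (p := p) k f) ((p:ℝ)^k))) := by
  have hp1 : 1 < p := (Fact.out : p.Prime).one_lt
  intro f g hfg
  rw [Function.onFun, Set.disjoint_left]
  intro z hzf hzg
  obtain ⟨i, hi⟩ := Function.ne_iff.1 hfg
  have h1 : ‖rep (p := p) k f i - rep (p := p) k g i‖ ≤ (p:ℝ)^k := by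
    have hf : ‖rep (p := p) k f i - z i‖ ≤ (p:ℝ)^k := by
      have := (norm_le_pi_norm (rep (p := p) k f - z) i)
      refine this.trans ?_
      rw [← dist_eq_norm, dist_comm]
      exact Metric.mem_closedBall.1 hzf
    have hg : ‖z i - rep (p := p) k g i‖ ≤ (p:ℝ)^k := by
      have := (norm_le_pi_norm (z - rep (p := p) k g) i)
      refine this.trans ?_
      rw [← dist_eq_norm]
      exact Metric.mem_closedBall.1 hzg
    have h2 := Padic.nonarchimedean (rep (p := p) k f i - z i) (z i - rep (p := p) k g i)
    simpa using h2.trans (max_le hf hg)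
  have h3 : ‖rep (p := p) k f i - rep (p := p) k g i‖ = (p:ℝ)^(k+1) := coord_sep k (f i) (g i) hi
  rw [h3] at h1
  have : (p:ℝ)^k < (p:ℝ)^(k+1) :=
    zpow_lt_zpow_right₀ (by exact_mod_cast hp1) (by omega)
  linarith

variable [MeasurableSpace (Fin n → ℚ_[p])] [BorelSpace (Fin n → ℚ_[p])]

lemma measure_closedBall_translate (μ : Measure V) [μ.IsAddHaarMeasure] (v : V) (r : ℝ) :
    μ (Metric.closedBall v r) = μ (Metric.closedBall 0 r) := by
  rw [← measure_preimage_add μ v (Metric.closedBall v r)]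
  congr 1
  ext y
  simp [Metric.mem_closedBall, dist_eq_norm]

lemma measure_ball_step (μ : Measure V) [μ.IsAddHaarMeasure] (k : ℤ) :
    μ (Metric.closedBall (0 : V) ((p:ℝ)^(k+1)))
      = (p:ℝ≥0∞)^(n:ℕ) * μ (Metric.closedBall (0 : V) ((p:ℝ)^k)) := by
  rw [ball_cover k, measure_iUnion (ball_disj k) (fun f => measurableSet_closedBall)]
  have h1 : ∀ f : Fin n → Fin p,
      μ (Metric.closedBall (rep (p := p) k f) ((p:ℝ)^k))
        = μ (Metric.closedBall (0 : V) ((p:ℝ)^k)) :=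
    fun f => measure_closedBall_translate μ _ _
  simp_rw [h1]
  rw [tsum_fintype]
  rw [Finset.sum_const, Finset.card_univ]
  rw [nsmul_eq_mul]
  congr 1
  rw [Fintype.card_fun]
  simp

lemma measure_ball (μ : Measure V) [μ.IsAddHaarMeasure]
    (hμ : μ (Metric.closedBall (0:V) 1) = 1) (k : ℤ) :
    μ (Metric.closedBall (0 : V) ((p:ℝ)^k)) = (p:ℝ≥0∞)^(k * (n:ℤ)) := by
  have hp1 : 1 < p := (Fact.out : p.Prime).one_lt
  have hp0 : (p:ℝ≥0∞) ≠ 0 := by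
    simp; omega
  have hpt : (p:ℝ≥0∞) ≠ ⊤ := by simp
  induction k using Int.induction_on with
  | zero => simpa using hμ
  | succ k ih =>
      rw [measure_ball_step μ k, ih, ← zpow_natCast (p:ℝ≥0∞) n, ← ENNReal.zpow_add hp0 hpt]
      congr 1
      ring
  | pred k ih =>
      have hstep := measure_ball_step μ (-(k:ℤ)-1)
      rw [show (-(k:ℤ)-1+1) = -(k:ℤ) by ring, ih] at hstep
      have hrhs : (p:ℝ≥0∞)^((-(k:ℤ)) * (n:ℤ))
          = (p:ℝ≥0∞)^(n:ℕ) * (p:ℝ≥0∞)^((-(k:ℤ)-1) * (n:ℤ)) := by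
        rw [← zpow_natCast (p:ℝ≥0∞) n, ← ENNReal.zpow_add hp0 hpt]
        congr 1
        ring
      rw [hrhs] at hstep
      rw [show (-(k:ℤ)-1) = (-(k+1:ℕ):ℤ) by push_cast; ring] at hstep ⊢
      exact ((ENNReal.mul_right_inj (pow_ne_zero n hp0) (by simp [ENNReal.pow_ne_top hpt]) ).1 hstep).symm

lemma core_integrable (μ : Measure (Fin n → ℚ_[p])) [μ.IsAddHaarMeasure]
    (hμ : μ (Metric.closedBall (0 : Fin n → ℚ_[p]) 1) = 1)
    (β : ℝ) (hβ : (n:ℝ) < β) (l : ℤ) :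
    IntegrableOn (fun y : Fin n → ℚ_[p] => ‖y‖ ^ (-β))
      {y : Fin n → ℚ_[p] | (p:ℝ)^l ≤ ‖y‖} μ := by
  have hp1 : 1 < p := (Fact.out : p.Prime).one_lt
  have hpR : (1:ℝ) < (p:ℝ) := by exact_mod_cast hp1
  have hpR0 : (0:ℝ) < (p:ℝ) := by positivity
  have hβ0 : 0 ≤ β := le_trans (Nat.cast_nonneg n) hβ.le
  set S : Set (Fin n → ℚ_[p]) := {y | (p:ℝ)^l ≤ ‖y‖} with hS_def
  have hSm : MeasurableSet S := measurableSet_le measurable_const measurable_norm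
  have hpos : ∀ y ∈ S, (0:ℝ) < ‖y‖ := fun y hy => lt_of_lt_of_le (zpow_pos hpR0 l) hy
  have hcont : ContinuousOn (fun y : Fin n → ℚ_[p] => ‖y‖ ^ (-β)) S :=
    ContinuousOn.rpow_const continuous_norm.continuousOn
      (fun y hy => Or.inl (ne_of_gt (hpos y hy)))
  refine ⟨hcont.aestronglyMeasurable hSm, ?_⟩
  rw [hasFiniteIntegral_iff_norm]
  have hnorm : ∀ y : Fin n → ℚ_[p], ENNReal.ofReal ‖‖y‖ ^ (-β)‖
      = ENNReal.ofReal (‖y‖ ^ (-β)) := by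
    intro y; rw [Real.norm_of_nonneg (Real.rpow_nonneg (norm_nonneg y) _)]
  simp_rw [hnorm]
  -- the shells
  set A : ℕ → Set (Fin n → ℚ_[p]) :=
    fun k => {y | (p:ℝ)^(l+(k:ℤ)) ≤ ‖y‖ ∧ ‖y‖ < (p:ℝ)^(l+(k:ℤ)+1)} with hA_def
  have hAm : ∀ k, MeasurableSet (A k) := by
    intro k
    exact (measurableSet_le measurable_const measurable_norm).inter
      (measurableSet_lt measurable_norm measurable_const)
  have hSsub : S ⊆ ⋃ k, A k := by
    intro y hy
    have h0 : 0 < ‖y‖ := hpos y hy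
    obtain ⟨m, hm⟩ := exists_mem_Ico_zpow h0 hpR
    have hlm : l ≤ m := by
      by_contra h
      push_neg at h
      have : ‖y‖ < (p:ℝ)^l :=
        lt_of_lt_of_le hm.2 (zpow_le_zpow_right₀ hpR.le (by omega))
      exact absurd hy (not_le.2 this)
    refine Set.mem_iUnion.2 ⟨(m - l).toNat, ?_⟩
    have hml : l + ((m - l).toNat : ℤ) = m := by
      rw [Int.toNat_of_nonneg (sub_nonneg.2 hlm)]; ring
    constructor
    · rw [hml]; exact hm.1
    · rw [hml]; exact hm.2
  set P : ℝ≥0∞ := (p : ℝ≥0∞) with hP_def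
  have hP0 : P ≠ 0 := by simp [hP_def]; omega
  have hPt : P ≠ ⊤ := by simp [hP_def]
  have hP1 : 1 < P := by
    rw [hP_def]; exact_mod_cast hp1
  set d : ℝ := (n:ℝ) - β with hd_def
  set c0 : ℝ := (l:ℝ)*(-β) + ((l:ℝ)+1)*(n:ℝ) with hc0_def
  -- bound each shell integral
  have hshell : ∀ k : ℕ, (∫⁻ y in A k, ENNReal.ofReal (‖y‖ ^ (-β)) ∂μ)
      ≤ P ^ (c0 + (k:ℝ)*d) := by
    intro k
    have hb1 : (∫⁻ y in A k, ENNReal.ofReal (‖y‖ ^ (-β)) ∂μ)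
        ≤ (∫⁻ _ in A k, ENNReal.ofReal (((p:ℝ)^(l+(k:ℤ))) ^ (-β)) ∂μ) := by
      refine setLIntegral_mono' (hAm k) ?_
      intro y hy
      exact ENNReal.ofReal_le_ofReal
        (Real.rpow_le_rpow_of_nonpos (zpow_pos hpR0 _) hy.1 (neg_nonpos.2 hβ0))
    rw [setLIntegral_const] at hb1
    have hsub : A k ⊆ Metric.closedBall (0 : Fin n → ℚ_[p]) ((p:ℝ)^(l+(k:ℤ)+1)) := by
      intro y hy
      rw [Metric.mem_closedBall, dist_zero_right]
      exact hy.2.le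
    have hmeas : μ (A k) ≤ P ^ ((l+(k:ℤ)+1) * (n:ℤ)) := by
      rw [← measure_ball μ hμ (l+(k:ℤ)+1)]
      exact measure_mono hsub
    have hterm : ENNReal.ofReal (((p:ℝ)^(l+(k:ℤ))) ^ (-β)) * μ (A k)
        ≤ ENNReal.ofReal (((p:ℝ)^(l+(k:ℤ))) ^ (-β)) * P ^ ((l+(k:ℤ)+1) * (n:ℤ)) :=
      mul_le_mul_right hmeas _
    refine hb1.trans (hterm.trans (le_of_eq ?_))
    -- now rewrite everything as a single rpow of P
    have e1 : ENNReal.ofReal (((p:ℝ)^(l+(k:ℤ))) ^ (-β)) = P ^ ((((l+(k:ℤ)):ℤ):ℝ) * (-β)) := by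
      rw [← Real.rpow_intCast (p:ℝ) (l+(k:ℤ)), ← Real.rpow_mul hpR0.le,
        ← ENNReal.ofReal_rpow_of_pos hpR0]
      rw [hP_def, ENNReal.ofReal_natCast]
    have e2 : P ^ ((l+(k:ℤ)+1) * (n:ℤ)) = P ^ (((((l+(k:ℤ)+1) * (n:ℤ)):ℤ)):ℝ) :=
      (ENNReal.rpow_intCast P _).symm
    rw [e1, e2, ← ENNReal.rpow_add _ _ hP0 hPt]
    congr 1
    push_cast
    rw [hc0_def, hd_def]
    ring
  have hgeom : (∑' k : ℕ, P ^ (c0 + (k:ℝ)*d)) < ⊤ := by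
    have hPd : P ^ d < 1 := by
      have hd0 : 0 < -d := by rw [hd_def]; linarith
      rw [show d = -(-d) by ring, ENNReal.rpow_neg]
      exact ENNReal.inv_lt_one.2 (ENNReal.one_lt_rpow hP1 hd0)
    have hrw : ∀ k : ℕ, P ^ (c0 + (k:ℝ)*d) = P ^ c0 * (P ^ d) ^ k := by
      intro k
      rw [ENNReal.rpow_add _ _ hP0 hPt]
      congr 1
      rw [mul_comm (k:ℝ) d, ENNReal.rpow_mul, ENNReal.rpow_natCast]
    simp_rw [hrw]
    rw [ENNReal.tsum_mul_left, ENNReal.tsum_geometric]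
    apply ENNReal.mul_lt_top
    · simp [ENNReal.rpow_eq_top_iff, hP0, hPt, lt_top_iff_ne_top]
    · rw [lt_top_iff_ne_top]
      exact ENNReal.inv_ne_top.2 (by simp [tsub_eq_zero_iff_le, hPd.not_ge])
  calc (∫⁻ y in S, ENNReal.ofReal (‖y‖ ^ (-β)) ∂μ)
      ≤ ∫⁻ y in ⋃ k, A k, ENNReal.ofReal (‖y‖ ^ (-β)) ∂μ := lintegral_mono_set hSsub
    _ ≤ ∑' k : ℕ, ∫⁻ y in A k, ENNReal.ofReal (‖y‖ ^ (-β)) ∂μ := lintegral_iUnion_le _ _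
    _ ≤ ∑' k : ℕ, P ^ (c0 + (k:ℝ)*d) := ENNReal.tsum_le_tsum hshell
    _ < ⊤ := hgeom

lemma pi_nonarch (a b : Fin n → ℚ_[p]) : ‖a + b‖ ≤ max ‖a‖ ‖b‖ := by
  rw [pi_norm_le_iff_of_nonneg (le_max_of_le_left (norm_nonneg a))]
  intro i
  exact (Padic.nonarchimedean (a i) (b i)).trans
    (max_le_max (norm_le_pi_norm a i) (norm_le_pi_norm b i))

lemma max_rpow_le {a b lam : ℝ} (ha : 0 ≤ a) (hb : 0 ≤ b) :
    (max a b) ^ lam ≤ a ^ lam + b ^ lam := by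
  rcases le_total a b with h | h
  · rw [max_eq_right h]
    exact le_add_of_nonneg_left (Real.rpow_nonneg ha _)
  · rw [max_eq_left h]
    exact le_add_of_nonneg_right (Real.rpow_nonneg hb _)

lemma integrableOn_comp_sub (μ : Measure (Fin n → ℚ_[p])) [μ.IsAddHaarMeasure]
    (x : Fin n → ℚ_[p]) {g : (Fin n → ℚ_[p]) → ℝ} {S₀ : Set (Fin n → ℚ_[p])}
    (hS₀ : MeasurableSet S₀) (hg : IntegrableOn g S₀ μ) :
    IntegrableOn (fun ξ => g (x - ξ)) {ξ | x - ξ ∈ S₀} μ := by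
  have hτ := Measure.measurePreserving_sub_left μ x
  have hind : Integrable (S₀.indicator g) μ := (integrable_indicator_iff hS₀).2 hg
  have h2 : Integrable ((S₀.indicator g) ∘ (fun ξ => x - ξ)) μ :=
    (hτ.integrable_comp hind.aestronglyMeasurable).2 hind
  have h3 : ((fun ξ : Fin n → ℚ_[p] => x - ξ) ⁻¹' S₀).indicator
      ((fun ξ : Fin n → ℚ_[p] => g (x - ξ))) = (S₀.indicator g) ∘ (fun ξ => x - ξ) := by
    funext ξ
    exact Set.indicator_comp_right _
  have hSm' : MeasurableSet ((fun ξ : Fin n → ℚ_[p] => x - ξ) ⁻¹' S₀) :=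
    (measurable_const.sub measurable_id) hS₀
  have h4 : IntegrableOn (fun ξ => g (x - ξ)) ((fun ξ : Fin n → ℚ_[p] => x - ξ) ⁻¹' S₀) μ := by
    rw [← integrable_indicator_iff hSm', h3]
    exact h2
  exact h4

end Stmt13Aux

open Stmt13Aux

/-- p-adic approximate-identity property of heat-kernel-type families. -/
theorem stmt13 {p : ℕ} [Fact p.Prime] {n : ℕ}
    [MeasurableSpace (Fin n → ℚ_[p])] [BorelSpace (Fin n → ℚ_[p])]
    (μ : Measure (Fin n → ℚ_[p])) [μ.IsAddHaarMeasure]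
    (hμ : μ (Metric.closedBall 0 1) = 1)
    (T α lam C C' : ℝ) (hT : 0 < T) (hlam : 0 ≤ lam) (hα : (n : ℝ) + lam < α)
    (hC : 0 < C) (hC' : 0 < C')
    (K : (Fin n → ℚ_[p]) → ℝ → ℝ)
    (hK0 : ∀ (x : Fin n → ℚ_[p]) (t : ℝ), 0 < t → t ≤ T → 0 ≤ K x t)
    (hK1 : ∀ t : ℝ, 0 < t → t ≤ T → (∫ x : Fin n → ℚ_[p], K x t ∂μ) = 1)
    (hKb : ∀ (x : Fin n → ℚ_[p]) (t : ℝ), 0 < t → t ≤ T →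
      K x t ≤ C * t * (t ^ ((1 : ℝ) / (α - n)) + ‖x‖) ^ (-α))
    (φ : (Fin n → ℚ_[p]) → ℂ) (l : ℤ)
    (hφloc : ∀ x x' : Fin n → ℚ_[p], ‖x'‖ ≤ (p : ℝ) ^ l → φ (x + x') = φ x)
    (hφgrow : ∀ x : Fin n → ℚ_[p], ‖φ x‖ ≤ C' * (1 + ‖x‖ ^ lam)) :
    ∀ x : Fin n → ℚ_[p],
      Tendsto (fun t : ℝ => ∫ ξ : Fin n → ℚ_[p], (K (x - ξ) t : ℂ) * φ ξ ∂μ)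
        (nhdsWithin 0 (Set.Ioi 0)) (nhds (φ x)) := by
  intro x
  have hp1 : 1 < p := (Fact.out : p.Prime).one_lt
  have hpR0 : (0:ℝ) < (p:ℝ) := by positivity
  have hα0 : 0 ≤ α := le_trans (by positivity) hα.le
  have hαn : (n:ℝ) < α := lt_of_le_of_lt (le_add_of_nonneg_right hlam) hα
  have hαln : (n:ℝ) < α - lam := by linarith
  set r : ℝ := (p:ℝ)^l with hr_def
  have hr0 : 0 < r := zpow_pos hpR0 l
  -- φ is continuous (locally constant)
  have hφcont : Continuous φ := by
    rw [continuous_iff_continuousAt]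
    intro x₀
    apply Filter.EventuallyEq.continuousAt (y := φ x₀)
    filter_upwards [Metric.closedBall_mem_nhds x₀ hr0] with ξ hξ
    have h1 : ‖ξ - x₀‖ ≤ r := by
      rw [← dist_eq_norm]
      exact Metric.mem_closedBall.1 hξ
    have := hφloc x₀ (ξ - x₀) h1
    simpa using this
  -- difference function
  set ψ : (Fin n → ℚ_[p]) → ℂ := fun ξ => φ ξ - φ x with hψ_def
  have hψ0 : ∀ ξ, ‖x - ξ‖ ≤ r → ψ ξ = 0 := by
    intro ξ h
    have h1 : ‖ξ - x‖ ≤ r := by rwa [norm_sub_rev] at h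
    have := hφloc x (ξ - x) h1
    simp only [hψ_def]
    rw [sub_eq_zero]
    simpa using this
  -- norms of φ values
  have hφn : ∀ ξ : Fin n → ℚ_[p], ‖φ ξ‖ ≤ C' * (1 + ‖ξ‖ ^ lam) := by
    intro ξ
    exact hφgrow ξ
  -- outside region
  set S : Set (Fin n → ℚ_[p]) := {ξ | r ≤ ‖x - ξ‖} with hS_def
  have hSm : MeasurableSet S :=
    measurableSet_le measurable_const ((measurable_const.sub measurable_id).norm)
  set c1 : ℝ := 2 + 2 * ‖x‖ ^ lam with hc1_def
  have hψbound : ∀ ξ ∈ S, ‖ψ ξ‖ ≤ C' * (c1 + ‖x - ξ‖ ^ lam) := by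
    intro ξ _
    have h1 : ‖ψ ξ‖ ≤ ‖φ ξ‖ + ‖φ x‖ := norm_sub_le _ _
    have h2 : ‖ξ‖ ^ lam ≤ ‖x‖ ^ lam + ‖x - ξ‖ ^ lam := by
      have h3 : ‖ξ‖ ≤ max ‖x‖ ‖x - ξ‖ := by
        have := pi_nonarch x (ξ - x)
        simp only [add_sub_cancel] at this
        refine this.trans ?_
        rw [norm_sub_rev x ξ]
      calc ‖ξ‖ ^ lam ≤ (max ‖x‖ ‖x - ξ‖) ^ lam :=
            Real.rpow_le_rpow (norm_nonneg _) h3 hlam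
        _ ≤ ‖x‖ ^ lam + ‖x - ξ‖ ^ lam := max_rpow_le (norm_nonneg _) (norm_nonneg _)
    calc ‖ψ ξ‖ ≤ ‖φ ξ‖ + ‖φ x‖ := h1
      _ ≤ C' * (1 + ‖ξ‖ ^ lam) + C' * (1 + ‖x‖ ^ lam) := add_le_add (hφn ξ) (hφn x)
      _ ≤ C' * (1 + (‖x‖ ^ lam + ‖x - ξ‖ ^ lam)) + C' * (1 + ‖x‖ ^ lam) := by
          have := mul_le_mul_of_nonneg_left (add_le_add_left h2 1) hC'.le
          linarith
      _ = C' * (c1 + ‖x - ξ‖ ^ lam) := by rw [hc1_def]; ring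
  -- dominating function
  set D : (Fin n → ℚ_[p]) → ℝ :=
    S.indicator (fun ξ => C * C' * (c1 * ‖x - ξ‖ ^ (-α) + ‖x - ξ‖ ^ (lam - α))) with hD_def
  have hDint : Integrable D μ := by
    rw [hD_def, integrable_indicator_iff hSm]
    have hg1 : IntegrableOn (fun ξ : Fin n → ℚ_[p] => ‖x - ξ‖ ^ (-α)) S μ := by
      have := integrableOn_comp_sub μ x
        (measurableSet_le measurable_const measurable_norm)
        (core_integrable μ hμ α hαn l)
      exact this
    have hg2 : IntegrableOn (fun ξ : Fin n → ℚ_[p] => ‖x - ξ‖ ^ (lam - α)) S μ := by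
      have h := integrableOn_comp_sub μ x
        (measurableSet_le measurable_const measurable_norm)
        (core_integrable μ hμ (α - lam) hαln l)
      have he : (fun ξ : Fin n → ℚ_[p] => ‖x - ξ‖ ^ (-(α - lam)))
          = (fun ξ : Fin n → ℚ_[p] => ‖x - ξ‖ ^ (lam - α)) := by
        funext ξ; congr 1; ring
      rwa [he] at h
    exact (((hg1.const_mul c1).add hg2).const_mul (C * C'))
  -- the pointwise bound
  have hbound : ∀ t : ℝ, 0 < t → t ≤ T → ∀ ξ,
      ‖(K (x - ξ) t : ℂ) * ψ ξ‖ ≤ t * D ξ := by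
    intro t ht htT ξ
    by_cases hle : r ≤ ‖x - ξ‖
    · have hmem : ξ ∈ S := hle
      set a : ℝ := ‖x - ξ‖ with ha_def
      have ha0 : 0 < a := lt_of_lt_of_le hr0 hle
      have hKle : K (x - ξ) t ≤ C * t * a ^ (-α) := by
        refine (hKb (x - ξ) t ht htT).trans ?_
        apply mul_le_mul_of_nonneg_left _ (by positivity)
        exact Real.rpow_le_rpow_of_nonpos ha0
          (le_add_of_nonneg_left (Real.rpow_nonneg ht.le _)) (neg_nonpos.2 hα0)
      have hnorm : ‖(K (x - ξ) t : ℂ) * ψ ξ‖ = K (x - ξ) t * ‖ψ ξ‖ := by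
        rw [norm_mul, Complex.norm_real, Real.norm_of_nonneg (hK0 _ t ht htT)]
      rw [hnorm]
      calc K (x - ξ) t * ‖ψ ξ‖
          ≤ (C * t * a ^ (-α)) * (C' * (c1 + a ^ lam)) := by
            apply mul_le_mul hKle (hψbound ξ hmem) (norm_nonneg _) (by positivity)
        _ = t * (C * C' * (c1 * a ^ (-α) + a ^ (-α) * a ^ lam)) := by ring
        _ = t * D ξ := by
            rw [← Real.rpow_add ha0, hD_def, Set.indicator_of_mem hmem]
            congr 2
            ring_nf
            rfl
    · push_neg at hle
      have : ψ ξ = 0 := hψ0 ξ hle.le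
      rw [this, mul_zero, norm_zero, hD_def, Set.indicator_of_notMem (by
        simp only [hS_def, Set.mem_setOf_eq]; exact not_le.2 hle)]
      simp [mul_nonneg ht.le]
  -- conclusion
  set M : ℝ := ∫ ξ, D ξ ∂μ with hM_def
  rw [← tendsto_sub_nhds_zero_iff]
  apply squeeze_zero_norm' (a := fun t : ℝ => t * M)
  · filter_upwards [Ioo_mem_nhdsGT_of_mem (Set.mem_Ico.2 ⟨le_refl (0:ℝ), hT⟩)] with t ht
    obtain ⟨ht0, htT⟩ := ht
    have htT' : t ≤ T := htT.le
    -- integrability of the kernel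
    have hKint : Integrable (fun y => K y t) μ := by
      by_contra h
      have := integral_undef h
      rw [hK1 t ht0 htT'] at this
      norm_num at this
    have hτ := Measure.measurePreserving_sub_left μ x
    have hKxint : Integrable (fun ξ => K (x - ξ) t) μ :=
      (hτ.integrable_comp hKint.aestronglyMeasurable).2 hKint
    have hKxCint : Integrable (fun ξ => (K (x - ξ) t : ℂ)) μ := hKxint.ofReal
    have hKψint : Integrable (fun ξ => (K (x - ξ) t : ℂ) * ψ ξ) μ := by
      apply Integrable.mono' (hDint.const_mul t)
        (hKxCint.aestronglyMeasurable.mul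
          ((hφcont.sub continuous_const).aestronglyMeasurable))
      filter_upwards with ξ
      exact hbound t ht0 htT' ξ
    have hsplit : (fun ξ => (K (x - ξ) t : ℂ) * φ ξ)
        = fun ξ => (K (x - ξ) t : ℂ) * ψ ξ + (K (x - ξ) t : ℂ) * φ x := by
      funext ξ
      simp only [hψ_def]
      ring
    have hint1 : (∫ ξ, (K (x - ξ) t : ℂ) ∂μ) = 1 := by
      have hcomp : (∫ ξ, (K (x - ξ) t : ℂ) ∂μ)
          = ∫ y, ((K y t : ℝ) : ℂ) ∂μ :=
        hτ.integral_comp (Homeomorph.measurableEmbedding (Homeomorph.subLeft x))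
          (fun y => ((K y t : ℝ) : ℂ))
      have hor : (∫ y, ((K y t : ℝ) : ℂ) ∂μ) = ((∫ y, K y t ∂μ : ℝ) : ℂ) := integral_ofReal
      rw [hcomp, hor, hK1 t ht0 htT']
      norm_num
    have hintegral : (∫ ξ, (K (x - ξ) t : ℂ) * φ ξ ∂μ) - φ x
        = ∫ ξ, (K (x - ξ) t : ℂ) * ψ ξ ∂μ := by
      rw [hsplit, integral_add hKψint (hKxCint.mul_const (φ x)),
        integral_mul_const (φ x) (fun ξ => ((K (x - ξ) t : ℝ) : ℂ)), hint1, one_mul]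
      ring
    rw [hintegral]
    calc ‖∫ ξ, (K (x - ξ) t : ℂ) * ψ ξ ∂μ‖
        ≤ ∫ ξ, ‖(K (x - ξ) t : ℂ) * ψ ξ‖ ∂μ := norm_integral_le_integral_norm _
      _ ≤ ∫ ξ, t * D ξ ∂μ := by
          apply integral_mono hKψint.norm (hDint.const_mul t)
          intro ξ
          exact hbound t ht0 htT' ξ
      _ = t * M := integral_const_mul t D
  · have h1 : Tendsto (fun t : ℝ => t * M) (nhds 0) (nhds 0) := by
      have := (continuous_id.mul (continuous_const (y := M))).tendsto 0
      simpa [Pi.mul_def] using this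
    exact h1.mono_left nhdsWithin_le_nhds
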